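/- Let A ∈ SL(d,ℤ) be hyperbolic symmetric in dimension 2 with entropy h(A) = ln|λ|, |λ|>1. Then there exist constants C₁, C₂ > 0 such that C₁ e^{h(A)n} ≤ min over nonzero k ∈ ℤ² of Σ_{l=1}^n |A^l k|² ≤ C₂ e^{h(A)n} for all n ≥ 1. -/

import Mathlib

open Matrix

private lemma amgm2 (X Y Z : ℝ) (hX : 0 ≤ X) (hY : 0 ≤ Y) (h : Z^2 ≤ X*Y) :
    2*Z ≤ X + Y := by nlinarith [sq_nonneg (X - Y), sq_nonneg (X + Y)]

private lemma rec_sol (lam mu T : ℝ) (hlm : lam * mu = 1) (hT : T = lam + mu) (hne : lam - mu ≠ 0)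
    (g : ℕ → ℝ) (hrec : ∀ j, g (j+2) = T * g (j+1) - g j) :
    ∀ j, g j = (g 1 - mu * g 0)/(lam - mu) * lam^j + (lam * g 0 - g 1)/(lam - mu) * mu^j := by
  set α := (g 1 - mu * g 0)/(lam - mu) with hα
  set β := (lam * g 0 - g 1)/(lam - mu) with hβ
  have key : ∀ j, g j = α * lam^j + β * mu^j ∧ g (j+1) = α * lam^(j+1) + β * mu^(j+1) := by
    intro j
    induction j with
    | zero =>
      constructor
      · simp only [pow_zero, mul_one, hα, hβ]; field_simp; ring
      · simp only [pow_one, hα, hβ]; field_simp; ring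
    | succ j ih =>
      refine ⟨ih.2, ?_⟩
      have h2 := hrec j
      rw [ih.1, ih.2, hT] at h2
      rw [show j + 1 + 1 = j + 2 from rfl, h2]
      linear_combination (α * lam^j + β * mu^j) * hlm
  exact fun j => (key j).1

private lemma ch2 {R : Type*} [CommRing R] [LinearOrder R] [IsStrictOrderedRing R] (A : Matrix (Fin 2) (Fin 2) R)
    (hdet : A.det = 1) : A * A = (Matrix.trace A) • A - 1 := by
  have hd := Matrix.det_fin_two A
  rw [hdet] at hd
  have ht : Matrix.trace A = A 0 0 + A 1 1 := Matrix.trace_fin_two A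
  rw [ht]
  ext i j
  fin_cases i <;> fin_cases j <;>
    simp only [Matrix.mul_apply, Fin.sum_univ_two, Matrix.one_apply, Matrix.smul_apply,
      Matrix.sub_apply, smul_eq_mul, if_true, if_false] <;>
    norm_num <;> nlinarith [hd, sq_nonneg (A 0 0)]

private lemma inv_facts {R : Type*} [CommRing R] (A : Matrix (Fin 2) (Fin 2) R) (t : R)
    (hch : A * A = t • A - 1) :
    A * (t • 1 - A) = 1 ∧ (t • 1 - A) * A = 1 ∧
      (t • 1 - A) * (t • 1 - A) = t • (t • 1 - A) - 1 := by
  have h1 : A * (t • 1 - A) = 1 := by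
    rw [Matrix.mul_sub, mul_smul_comm, mul_one, hch]; abel
  have h2 : (t • 1 - A) * A = 1 := by
    rw [Matrix.sub_mul, smul_mul_assoc, one_mul, hch]; abel
  refine ⟨h1, h2, ?_⟩
  rw [Matrix.sub_mul, smul_mul_assoc, one_mul, Matrix.mul_sub, mul_smul_comm, mul_one, hch]
  rw [smul_sub]
  abel

private lemma even_dot (B : Matrix (Fin 2) (Fin 2) ℝ) (hBs : Bᵀ = B) (w : Fin 2 → ℝ) (l : ℕ) :
    dotProduct w ((B ^ (2 * l)).mulVec w) =
      dotProduct ((B ^ l).mulVec w) ((B ^ l).mulVec w) := by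
  have hpt : (B ^ l)ᵀ = B ^ l := by rw [Matrix.transpose_pow, hBs]
  have hv : w ᵥ* (B ^ l) = (B ^ l) *ᵥ w := by
    rw [← hpt, Matrix.vecMul_transpose, hpt]
  rw [two_mul, pow_add, ← Matrix.mulVec_mulVec, Matrix.dotProduct_mulVec, hv]

private lemma alpha_nonneg (L2 M2 α β : ℝ) (hL2 : 1 < L2) (hprod : L2 * M2 = 1)
    (h : ∀ l : ℕ, 0 ≤ α * L2 ^ l + β * M2 ^ l) : 0 ≤ α := by
  by_contra hneg
  push_neg at hneg
  obtain ⟨l, hl⟩ := pow_unbounded_of_one_lt (β / (-α)) hL2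
  have hL2pos : 0 < L2 := lt_trans one_pos hL2
  have h2 : 0 ≤ α * L2 ^ (2 * l) + β * (L2 * M2) ^ l := by
    have := h l
    have e : α * L2 ^ (2 * l) + β * (L2 * M2) ^ l = (α * L2 ^ l + β * M2 ^ l) * L2 ^ l := by
      rw [two_mul, pow_add, mul_pow]; ring
    rw [e]
    exact mul_nonneg this (pow_nonneg hL2pos.le l)
  rw [hprod, one_pow] at h2
  have h3 : (-α) * L2 ^ l ≤ (-α) * L2 ^ (2 * l) := by
    apply mul_le_mul_of_nonneg_left _ (by linarith)
    exact pow_le_pow_right₀ hL2.le (by omega)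
  have h5 : β < (-α) * L2 ^ l := by
    rw [div_lt_iff₀ (by linarith)] at hl; linarith [hl]
  linarith

private lemma qne (t m s : ℤ) (ht : 2 < |t|) (hm : 0 < m) : t * m * s - m ^ 2 - s ^ 2 ≠ 0 := by
  intro h
  have h2 : (2 * s - t * m) ^ 2 = (t ^ 2 - 4) * m ^ 2 := by ring_nf; linear_combination -4 * h
  have hdvd : m ^ 2 ∣ (2 * s - t * m) ^ 2 := ⟨t ^ 2 - 4, by linarith [h2]⟩
  have hdvd2 : m ∣ (2 * s - t * m) := by
    rwa [Int.pow_dvd_pow_iff (two_ne_zero)] at hdvd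
  obtain ⟨d, hd⟩ := hdvd2
  have h3 : d ^ 2 = t ^ 2 - 4 := by
    have hh : m ^ 2 * d ^ 2 = (t ^ 2 - 4) * m ^ 2 := by rw [← h2, hd]; ring
    have hm2 : m ^ 2 ≠ 0 := pow_ne_zero 2 hm.ne'
    rw [mul_comm (t ^ 2 - 4)] at hh
    replace hh := mul_left_cancel₀ hm2 hh
    nlinarith [hh, sq_nonneg m, hm]
  have ha : 3 ≤ |t| := ht
  have hb : 0 ≤ |d| := abs_nonneg d
  have hd2 : |d| ^ 2 = t ^ 2 - 4 := by rw [sq_abs]; exact h3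
  have ht2 : |t| ^ 2 = t ^ 2 := sq_abs t
  rcases le_or_gt (|t|) (|d|) with hc | hc
  · nlinarith
  · have : |d| ≤ |t| - 1 := by omega
    nlinarith

private lemma cast_mulVec (A : Matrix (Fin 2) (Fin 2) ℤ) (k : Fin 2 → ℤ) (l : ℕ) :
    ((A.map (Int.cast : ℤ → ℝ)) ^ l).mulVec (fun i => (k i : ℝ)) =
      fun i => (((A ^ l).mulVec k i : ℤ) : ℝ) := by
  have hmap : (A.map (Int.cast : ℤ → ℝ)) ^ l = (A ^ l).map (Int.cast : ℤ → ℝ) := by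
    have := map_pow ((Int.castRingHom ℝ).mapMatrix) A l
    simpa [RingHom.mapMatrix_apply] using this.symm
  rw [hmap]
  funext i
  simp [Matrix.mulVec, dotProduct, Fin.sum_univ_two, Matrix.map_apply]

private lemma sq_term (A : Matrix (Fin 2) (Fin 2) ℤ) (hAs : Aᵀ = A) (k : Fin 2 → ℤ) (l : ℕ) :
    ∑ i, (((A ^ l).mulVec k i : ℤ) : ℝ) ^ 2 =
      dotProduct (fun i => (k i : ℝ))
        (((A.map (Int.cast : ℤ → ℝ)) ^ (2 * l)).mulVec (fun i => (k i : ℝ))) := by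
  have hBs : (A.map (Int.cast : ℤ → ℝ))ᵀ = A.map (Int.cast : ℤ → ℝ) := by
    rw [← Matrix.transpose_map, hAs]
  rw [even_dot _ hBs, cast_mulVec]
  simp [dotProduct, Fin.sum_univ_two]
  ring

private lemma seq_formula (B : Matrix (Fin 2) (Fin 2) ℝ) (T lam mu : ℝ)
    (hB2 : B * B = T • B - 1) (hlm : lam * mu = 1) (hT : T = lam + mu) (hne : lam - mu ≠ 0)
    (w : Fin 2 → ℝ) (j : ℕ) :
    dotProduct w ((B ^ j).mulVec w) =
      (dotProduct w (B.mulVec w) - mu * dotProduct w w) / (lam - mu) * lam ^ j +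
      (lam * dotProduct w w - dotProduct w (B.mulVec w)) / (lam - mu) * mu ^ j := by
  have hrec : ∀ i, dotProduct w ((B ^ (i+2)).mulVec w) =
      T * dotProduct w ((B ^ (i+1)).mulVec w) - dotProduct w ((B ^ i).mulVec w) := by
    intro i
    have hp : B ^ (i + 2) = T • B ^ (i+1) - B ^ i := by
      have h0 : B ^ (i + 2) = B ^ i * (B * B) := by
        rw [pow_succ, pow_succ, mul_assoc]
      rw [h0, hB2, Matrix.mul_sub, mul_smul_comm, mul_one, ← pow_succ]
    rw [hp, Matrix.sub_mulVec, Matrix.smul_mulVec, dotProduct_sub,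
      dotProduct_smul, smul_eq_mul]
  have := rec_sol lam mu T hlm hT hne (fun j => dotProduct w ((B ^ j).mulVec w)) hrec j
  simpa [pow_zero, pow_one, Matrix.one_mulVec] using this

private lemma geom_ub (r : ℝ) (hr : 1 < r) (n : ℕ) :
    ∑ l ∈ Finset.Icc 1 n, r ^ l ≤ r ^ (n + 1) / (r - 1) := by
  have h1 : ∑ l ∈ Finset.Icc 1 n, r ^ l ≤ ∑ l ∈ Finset.range (n+1), r ^ l := by
    apply Finset.sum_le_sum_of_subset_of_nonneg
    · intro x hx
      simp only [Finset.mem_Icc] at hx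
      simp only [Finset.mem_range]; omega
    · intro i _ _; positivity
  have h2 : ∑ l ∈ Finset.range (n+1), r ^ l = (r ^ (n+1) - 1) / (r - 1) := geom_sum_eq (by linarith) _
  rw [h2] at h1
  apply h1.trans
  apply div_le_div_of_nonneg_right (by linarith) (by linarith)

private lemma geom_lb (r : ℝ) (hr0 : 0 ≤ r) (hr : r < 1) (n : ℕ) :
    ∑ l ∈ Finset.Icc 1 n, r ^ l ≤ 1 / (1 - r) := by
  have h0 : Finset.Icc 1 n = Finset.Ico 1 (n+1) := by rw [Finset.Ico_add_one_right_eq_Icc]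
  rw [h0]
  have h2 := geom_sum_Ico_le_of_lt_one hr0 hr (m := 1) (n := n+1)
  apply h2.trans
  apply div_le_div_of_nonneg_right _ (by linarith)
  simpa using hr.le

private lemma coeffs (B : Matrix (Fin 2) (Fin 2) ℝ) (T lam mu : ℝ) (hB2 : B * B = T • B - 1)
    (hBs : Bᵀ = B) (hlm : lam * mu = 1) (hT : T = lam + mu) (hlamgt : 1 < |lam|)
    (w : Fin 2 → ℝ) :
    0 ≤ (dotProduct w (B.mulVec w) - mu * dotProduct w w) / (lam - mu) ∧
    0 ≤ (lam * dotProduct w w - dotProduct w (B.mulVec w)) / (lam - mu) ∧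
    (∀ j, dotProduct w ((B ^ j).mulVec w) =
      (dotProduct w (B.mulVec w) - mu * dotProduct w w) / (lam - mu) * lam ^ j +
      (lam * dotProduct w w - dotProduct w (B.mulVec w)) / (lam - mu) * mu ^ j) ∧
    (∀ j, dotProduct w (((T • 1 - B) ^ j).mulVec w) =
      (dotProduct w (B.mulVec w) - mu * dotProduct w w) / (lam - mu) * mu ^ j +
      (lam * dotProduct w w - dotProduct w (B.mulVec w)) / (lam - mu) * lam ^ j) := by
  have hlam1 : (1:ℝ) < lam ^ 2 := by
    have := sq_abs lam; nlinarith [hlamgt]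
  have hmusq : lam ^ 2 * mu ^ 2 = 1 := by nlinarith [hlm]
  have hmu1 : mu ^ 2 < 1 := by nlinarith [hlam1, sq_nonneg mu, hmusq]
  have hne : lam - mu ≠ 0 := by
    intro h
    have : lam = mu := by linarith [sub_eq_zero.mp h]
    rw [this] at hlam1
    nlinarith [hlam1, hmu1]
  set g0 := dotProduct w w with hg0
  set g1 := dotProduct w (B.mulVec w) with hg1
  set α := (g1 - mu * g0) / (lam - mu) with hα
  set β := (lam * g0 - g1) / (lam - mu) with hβ
  obtain ⟨hAD, hDA, hDD⟩ := inv_facts B T hB2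
  set Bd := T • (1 : Matrix (Fin 2) (Fin 2) ℝ) - B with hBdDef
  have hBds : Bdᵀ = Bd := by
    rw [hBdDef, Matrix.transpose_sub, Matrix.transpose_smul, Matrix.transpose_one, hBs]
  have hFB : ∀ j, dotProduct w ((B ^ j).mulVec w) = α * lam ^ j + β * mu ^ j :=
    seq_formula B T lam mu hB2 hlm hT hne w
  have hBdw : dotProduct w (Bd.mulVec w) = T * g0 - g1 := by
    rw [hBdDef, Matrix.sub_mulVec, Matrix.smul_mulVec, Matrix.one_mulVec,
      dotProduct_sub, dotProduct_smul, smul_eq_mul]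
  have hFBd : ∀ j, dotProduct w ((Bd ^ j).mulVec w) = α * mu ^ j + β * lam ^ j := by
    intro j
    have h := seq_formula Bd T mu lam hDD (by linarith [hlm, mul_comm lam mu]) (by linarith)
      (by intro h; apply hne; linarith [sub_eq_zero.mp h]) w j
    rw [hBdw, ← hg0] at h
    have hne2 : mu - lam ≠ 0 := by intro hz; apply hne; linarith
    rw [h, hα, hβ, hT]
    field_simp
    ring
  have hnnB : ∀ l : ℕ, 0 ≤ α * (lam ^ 2) ^ l + β * (mu ^ 2) ^ l := by
    intro l
    have h1 := hFB (2 * l)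
    have h2 := even_dot B hBs w l
    rw [h2] at h1
    have h3 : 0 ≤ dotProduct ((B ^ l).mulVec w) ((B ^ l).mulVec w) :=
      Finset.sum_nonneg fun i _ => mul_self_nonneg _
    rw [h1] at h3
    rwa [pow_mul, pow_mul] at h3
  have hnnBd : ∀ l : ℕ, 0 ≤ β * (lam ^ 2) ^ l + α * (mu ^ 2) ^ l := by
    intro l
    have h1 := hFBd (2 * l)
    have h2 := even_dot Bd hBds w l
    rw [h2] at h1
    have h3 : 0 ≤ dotProduct ((Bd ^ l).mulVec w) ((Bd ^ l).mulVec w) :=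
      Finset.sum_nonneg fun i _ => mul_self_nonneg _
    rw [h1] at h3
    rw [pow_mul, pow_mul] at h3
    linarith [h3]
  exact ⟨alpha_nonneg _ _ _ _ hlam1 hmusq hnnB, alpha_nonneg _ _ _ _ hlam1 hmusq hnnBd,
    hFB, hFBd⟩

set_option maxHeartbeats 4000000 in
/-- two-sided geometric bounds `C₁ e^{h(A)n} ≤ min_{k≠0} Σ_{l=1}^n |Aˡk|² ≤ C₂ e^{h(A)n}`
for a symmetric hyperbolic `A ∈ SL(2,ℤ)` with entropy `h(A) = ln|λ|`. -/
theorem arithmetic_min_entropy_bounds_dim_two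
    (A : Matrix (Fin 2) (Fin 2) ℤ) (hdet : A.det = 1) (hsymm : A.IsSymm)
    (htr : 2 < |Matrix.trace A|)
    (lam : ℝ) (hlam : 1 < |lam|)
    (heig : ∃ v : Fin 2 → ℝ, v ≠ 0 ∧ (A.map (Int.cast : ℤ → ℝ)).mulVec v = lam • v) :
    ∃ C₁ C₂ : ℝ, 0 < C₁ ∧ 0 < C₂ ∧ ∀ n : ℕ, 1 ≤ n →
      C₁ * Real.exp (Real.log |lam| * n) ≤
        sInf {s : ℝ | ∃ k : Fin 2 → ℤ, k ≠ 0 ∧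
          s = ∑ l ∈ Finset.Icc 1 n, ∑ i, (((A ^ l).mulVec k i : ℤ) : ℝ) ^ 2} ∧
      sInf {s : ℝ | ∃ k : Fin 2 → ℤ, k ≠ 0 ∧
          s = ∑ l ∈ Finset.Icc 1 n, ∑ i, (((A ^ l).mulVec k i : ℤ) : ℝ) ^ 2} ≤
        C₂ * Real.exp (Real.log |lam| * n) := by
  obtain ⟨v, hv0, hv⟩ := heig
  set t : ℤ := Matrix.trace A with htdef
  set B : Matrix (Fin 2) (Fin 2) ℝ := A.map (Int.cast : ℤ → ℝ) with hBdef
  set T : ℝ := (t : ℝ) with hTdef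
  -- basic facts about B
  have hBe : ∀ i j, B i j = (A i j : ℝ) := fun i j => rfl
  have hBdet : B.det = 1 := by
    have h := Matrix.det_fin_two A
    rw [hdet] at h
    rw [Matrix.det_fin_two]
    show (A 0 0 : ℝ) * (A 1 1 : ℝ) - (A 0 1 : ℝ) * (A 1 0 : ℝ) = 1
    exact_mod_cast h.symm
  have hBtr : Matrix.trace B = T := by
    rw [Matrix.trace_fin_two, hBe, hBe, hTdef, htdef, Matrix.trace_fin_two]
    push_cast; ring
  have hAs : Aᵀ = A := hsymm
  have hBs : Bᵀ = B := by rw [hBdef, ← Matrix.transpose_map, hAs]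
  -- real Cayley-Hamilton
  have hB2 : B * B = T • B - 1 := by rw [← hBtr]; exact ch2 B hBdet
  -- characteristic equation for lam
  have hchar : lam ^ 2 - T * lam + 1 = 0 := by
    have h0 : (B - lam • 1).mulVec v = 0 := by
      simp [Matrix.sub_mulVec, hv, Matrix.smul_mulVec]
    have hdet0 : (B - lam • 1).det = 0 := by
      rw [← Matrix.exists_mulVec_eq_zero_iff]
      exact ⟨v, hv0, h0⟩
    rw [Matrix.det_fin_two] at hdet0
    have h1 := Matrix.det_fin_two B
    rw [hBdet] at h1
    have h2 : Matrix.trace B = B 0 0 + B 1 1 := Matrix.trace_fin_two B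
    rw [hBtr] at h2
    simp only [Matrix.sub_apply, Matrix.smul_apply, Matrix.one_apply, smul_eq_mul] at hdet0
    norm_num at hdet0
    linear_combination hdet0 - lam * h2 + h1
  set mu : ℝ := T - lam with hmudef
  have hlm : lam * mu = 1 := by rw [hmudef]; nlinarith [hchar]
  have hT : T = lam + mu := by rw [hmudef]; ring
  set L : ℝ := |lam| with hLdef
  have hL : 1 < L := hlam
  have hL0 : 0 < L := lt_trans one_pos hL
  have hlamsq : lam ^ 2 = L ^ 2 := (sq_abs lam).symm
  have hmuabs : |mu| = L⁻¹ := by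
    have h1 : L * |mu| = 1 := by rw [hLdef, ← abs_mul, hlm, abs_one]
    field_simp at h1 ⊢
    linarith [h1]
  have hmusq : mu ^ 2 = (L⁻¹) ^ 2 := by rw [← sq_abs mu, hmuabs]
  have hLi0 : 0 < L⁻¹ := inv_pos.mpr hL0
  have hLi1 : L⁻¹ < 1 := inv_lt_one_of_one_lt₀ hL
  have hlam1 : (1:ℝ) < lam ^ 2 := by rw [hlamsq]; nlinarith [hL]
  have hmu1 : mu ^ 2 < 1 := by rw [hmusq]; nlinarith [hLi0, hLi1]
  have hne : lam - mu ≠ 0 := by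
    intro h
    have he : lam = mu := by linarith [sub_eq_zero.mp h]
    rw [he] at hlam1; linarith [hlam1, hmu1]
  have habsne : 0 < |lam - mu| := abs_pos.mpr hne
  -- integer matrices
  have hCH : A * A = t • A - 1 := ch2 A hdet
  obtain ⟨hAD, hDA, hDD⟩ := inv_facts A t hCH
  set Dm : Matrix (Fin 2) (Fin 2) ℤ := t • 1 - A with hDmdef
  have hDs : Dmᵀ = Dm := by
    rw [hDmdef, Matrix.transpose_sub, Matrix.transpose_smul, Matrix.transpose_one, hAs]
  have hBd_eq : Dm.map (Int.cast : ℤ → ℝ) = T • 1 - B := by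
    ext i j
    simp only [hDmdef, Matrix.map_apply, Matrix.sub_apply, Matrix.smul_apply, Matrix.one_apply,
      hBdef, hTdef, smul_eq_mul]
    push_cast
    split_ifs <;> push_cast <;> ring
  -- exp = L^n
  have hexp : ∀ n : ℕ, Real.exp (Real.log L * n) = L ^ n := by
    intro n
    rw [mul_comm, Real.exp_nat_mul, Real.exp_log hL0]
  -- the coefficient data for a vector
  -- lower bound for arbitrary nonzero k
  have hlow : ∀ n : ℕ, 1 ≤ n → ∀ k : Fin 2 → ℤ, k ≠ 0 →
      (L⁻¹ / |lam - mu|) * L ^ n ≤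
        ∑ l ∈ Finset.Icc 1 n, ∑ i, (((A ^ l).mulVec k i : ℤ) : ℝ) ^ 2 := by
    intro n hn k hk
    set w : Fin 2 → ℝ := fun i => (k i : ℝ) with hwdef
    obtain ⟨hα, hβ, hFB, hFBd⟩ := coeffs B T lam mu hB2 hBs hlm hT hlam w
    set g0 := dotProduct w w with hg0
    set g1 := dotProduct w (B.mulVec w) with hg1
    set α := (g1 - mu * g0) / (lam - mu) with hαdef
    set β := (lam * g0 - g1) / (lam - mu) with hβdef
    -- integer values
    set m : ℤ := dotProduct k k with hmdef
    set s : ℤ := dotProduct k (A.mulVec k) with hsdef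
    have hg0m : g0 = (m : ℝ) := by
      rw [hg0, hmdef]
      simp only [dotProduct, Fin.sum_univ_two, hwdef]
      push_cast; ring
    have hg1s : g1 = (s : ℝ) := by
      rw [hg1, hsdef, hwdef]
      have := cast_mulVec A k 1
      simp only [pow_one] at this
      rw [hBdef, this]
      simp only [dotProduct, Fin.sum_univ_two]
      push_cast; ring
    have hmpos : 0 < m := by
      rw [hmdef]
      have hki : k 0 ≠ 0 ∨ k 1 ≠ 0 := by
        by_contra hcon
        push_neg at hcon
        apply hk
        funext i
        fin_cases i <;> simp [hcon.1, hcon.2]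
      simp only [dotProduct, Fin.sum_univ_two]
      rcases hki with h | h
      · nlinarith [mul_self_nonneg (k 1), mul_self_pos.mpr h]
      · nlinarith [mul_self_nonneg (k 0), mul_self_pos.mpr h]
    set N : ℤ := t * m * s - m ^ 2 - s ^ 2 with hNdef
    have hN0 : N ≠ 0 := qne t m s htr hmpos
    have hTr : (t : ℝ) = lam + mu := by rw [← hTdef]; exact hT
    have hnum : ((s:ℝ) - mu * (m:ℝ)) * (lam * (m:ℝ) - (s:ℝ)) = ((N:ℤ) : ℝ) := by
      rw [hNdef]
      push_cast
      linear_combination (-(m:ℝ) * (s:ℝ)) * hTr - ((m:ℝ))^2 * hlm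
    have hprod : α * β = (N : ℝ) / (lam - mu) ^ 2 := by
      rw [hαdef, hβdef, hg0m, hg1s, div_mul_div_comm, hnum]
      congr 1
      ring
    have hNnn : (0:ℝ) ≤ (N : ℝ) := by
      have h1 : 0 ≤ α * β := mul_nonneg hα hβ
      rw [hprod] at h1
      have h2 : (0:ℝ) < (lam - mu) ^ 2 := by positivity
      have h3 := mul_nonneg h1 h2.le
      rwa [div_mul_cancel₀ _ (ne_of_gt h2)] at h3
    have hN1 : (1:ℝ) ≤ (N : ℝ) := by
      have : (1:ℤ) ≤ N := by
        rcases lt_or_eq_of_le (by exact_mod_cast hNnn : (0:ℤ) ≤ N) with h | h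
        · omega
        · exact absurd h.symm hN0
      exact_mod_cast this
    have hab : 1 / (lam - mu) ^ 2 ≤ α * β := by
      rw [hprod]
      apply div_le_div_of_nonneg_right hN1 (by positivity)
    -- term values
    have hterm : ∀ l, ∑ i, (((A ^ l).mulVec k i : ℤ) : ℝ) ^ 2 =
        α * (lam ^ 2) ^ l + β * (mu ^ 2) ^ l := by
      intro l
      rw [sq_term A hAs k l, ← hBdef, ← hwdef, hFB (2 * l), pow_mul, pow_mul]
    have htnn : ∀ l, (0:ℝ) ≤ ∑ i, (((A ^ l).mulVec k i : ℤ) : ℝ) ^ 2 := by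
      intro l; exact Finset.sum_nonneg fun i _ => sq_nonneg _
    have hsum_n : ∑ i, (((A ^ n).mulVec k i : ℤ) : ℝ) ^ 2 ≤
        ∑ l ∈ Finset.Icc 1 n, ∑ i, (((A ^ l).mulVec k i : ℤ) : ℝ) ^ 2 :=
      Finset.single_le_sum (fun l _ => htnn l) (Finset.mem_Icc.mpr ⟨hn, le_refl n⟩)
    have hsum_1 : ∑ i, (((A ^ 1).mulVec k i : ℤ) : ℝ) ^ 2 ≤
        ∑ l ∈ Finset.Icc 1 n, ∑ i, (((A ^ l).mulVec k i : ℤ) : ℝ) ^ 2 :=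
      Finset.single_le_sum (fun l _ => htnn l) (Finset.mem_Icc.mpr ⟨le_refl 1, hn⟩)
    set Z : ℝ := (L⁻¹ / |lam - mu|) * L ^ n with hZdef
    have hXn : α * (L ^ 2) ^ n ≤ ∑ i, (((A ^ n).mulVec k i : ℤ) : ℝ) ^ 2 := by
      rw [hterm n, hlamsq]
      have : 0 ≤ β * (mu ^ 2) ^ n := mul_nonneg hβ (pow_nonneg (sq_nonneg mu) n)
      linarith
    have hY1 : β * (L⁻¹) ^ 2 ≤ ∑ i, (((A ^ 1).mulVec k i : ℤ) : ℝ) ^ 2 := by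
      rw [hterm 1, pow_one, pow_one, hmusq]
      have : 0 ≤ α * lam ^ 2 := mul_nonneg hα (sq_nonneg lam)
      linarith
    have hZ2 : Z ^ 2 ≤ (α * (L ^ 2) ^ n) * (β * (L⁻¹) ^ 2) := by
      have h1 : Z ^ 2 = (1 / (lam - mu) ^ 2) * ((L ^ 2) ^ n * (L⁻¹) ^ 2) := by
        rw [hZdef, ← sq_abs (lam - mu),
          show ((L:ℝ) ^ 2) ^ n = (L ^ n) ^ 2 by rw [← pow_mul, ← pow_mul, mul_comm]]
        ring
      rw [h1]
      have h2 : (0:ℝ) ≤ (L ^ 2) ^ n * (L⁻¹) ^ 2 := by positivity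
      calc (1 / (lam - mu) ^ 2) * ((L ^ 2) ^ n * (L⁻¹) ^ 2)
          ≤ (α * β) * ((L ^ 2) ^ n * (L⁻¹) ^ 2) := by
            apply mul_le_mul_of_nonneg_right hab h2
        _ = (α * (L ^ 2) ^ n) * (β * (L⁻¹) ^ 2) := by ring
    have hZle : 2 * Z ≤ (α * (L ^ 2) ^ n) + (β * (L⁻¹) ^ 2) :=
      amgm2 _ _ _ (mul_nonneg hα (pow_nonneg (sq_nonneg L) n)) (mul_nonneg hβ (sq_nonneg L⁻¹)) hZ2
    have hfin : 2 * Z ≤ 2 * ∑ l ∈ Finset.Icc 1 n, ∑ i, (((A ^ l).mulVec k i : ℤ) : ℝ) ^ 2 := by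
      linarith [hXn, hY1, hsum_n, hsum_1, hZle]
    linarith [hfin]
  -- upper bound witness
  have hupp : ∀ n : ℕ, 1 ≤ n → ∃ k : Fin 2 → ℤ, k ≠ 0 ∧
      ∑ l ∈ Finset.Icc 1 n, ∑ i, (((A ^ l).mulVec k i : ℤ) : ℝ) ^ 2 ≤
        (2 * L ^ 3 / (L ^ 2 - 1)) * L ^ n := by
    intro n hn
    set mm : ℕ := (n + 1) / 2 with hmmdef
    have hmm1 : n ≤ 2 * mm := by omega
    have hmm2 : 2 * mm ≤ n + 1 := by omega
    set e : Fin 2 → ℤ := ![1, 0] with hedef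
    set k : Fin 2 → ℤ := (Dm ^ mm).mulVec e with hkdef
    have hcomm : Commute A Dm := hAD.trans hDA.symm
    have hADpow : ∀ a : ℕ, A ^ a * Dm ^ a = 1 := by
      intro a
      rw [← Commute.mul_pow hcomm, hAD, one_pow]
    have hk0 : k ≠ 0 := by
      intro hzero
      have h1 : (A ^ mm * Dm ^ mm).mulVec e = A ^ mm *ᵥ ((Dm ^ mm) *ᵥ e) := by
        rw [Matrix.mulVec_mulVec]
      rw [hADpow mm, ← hkdef, hzero, Matrix.mulVec_zero, Matrix.one_mulVec] at h1
      have := congrFun h1 0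
      simp [hedef] at this
    refine ⟨k, hk0, ?_⟩
    -- coefficients for e
    set w : Fin 2 → ℝ := fun i => (e i : ℝ) with hwdef
    obtain ⟨hα, hβ, hFB, hFBd⟩ := coeffs B T lam mu hB2 hBs hlm hT hlam w
    set g0 := dotProduct w w with hg0
    set g1 := dotProduct w (B.mulVec w) with hg1
    set α := (g1 - mu * g0) / (lam - mu) with hαdef
    set β := (lam * g0 - g1) / (lam - mu) with hβdef
    have hg01 : g0 = 1 := by
      rw [hg0, hwdef, hedef]; simp [dotProduct, Fin.sum_univ_two]
    -- bounds on even powers applied to e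
    have hAbound : ∀ j : ℕ, dotProduct w ((B ^ (2 * j)).mulVec w) ≤ L ^ (2 * j) := by
      intro j
      rw [hFB (2 * j), pow_mul, pow_mul, hlamsq]
      have h1 : β * (mu ^ 2) ^ j ≤ β * (L ^ 2) ^ j := by
        apply mul_le_mul_of_nonneg_left _ hβ
        apply pow_le_pow_left₀ (sq_nonneg mu)
        nlinarith [hmu1, hlam1, hlamsq]
      have h2 : α * (L ^ 2) ^ j + β * (L ^ 2) ^ j = (α + β) * (L ^ 2) ^ j := by ring
      have h3 : α + β = 1 := by
        have := hFB 0
        simp [Matrix.one_mulVec, ← hg0, hg01] at this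
        rw [hαdef, hβdef]
        linarith [this]
      calc α * (L ^ 2) ^ j + β * (mu ^ 2) ^ j ≤ α * (L ^ 2) ^ j + β * (L ^ 2) ^ j := by linarith
        _ = (L ^ 2) ^ j := by rw [h2, h3, one_mul]
        _ = L ^ (2 * j) := by rw [pow_mul]
    have hDbound : ∀ j : ℕ, dotProduct w (((Dm.map (Int.cast : ℤ → ℝ)) ^ (2 * j)).mulVec w)
        ≤ L ^ (2 * j) := by
      intro j
      rw [hBd_eq, hFBd (2 * j), pow_mul, pow_mul, hlamsq]
      have h1 : α * (mu ^ 2) ^ j ≤ α * (L ^ 2) ^ j := by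
        apply mul_le_mul_of_nonneg_left _ hα
        apply pow_le_pow_left₀ (sq_nonneg mu)
        nlinarith [hmu1, hlam1, hlamsq]
      have h3 : α + β = 1 := by
        have := hFB 0
        simp [Matrix.one_mulVec, ← hg0, hg01] at this
        rw [hαdef, hβdef]
        linarith [this]
      calc α * (mu ^ 2) ^ j + β * (L ^ 2) ^ j ≤ α * (L ^ 2) ^ j + β * (L ^ 2) ^ j := by linarith
        _ = (L ^ 2) ^ j := by rw [show α * (L ^ 2) ^ j + β * (L ^ 2) ^ j = (α + β) * (L ^ 2) ^ j from by ring, h3, one_mul]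
        _ = L ^ (2 * j) := by rw [pow_mul]
    -- per-term bound
    have hterm : ∀ l ∈ Finset.Icc 1 n, ∑ i, (((A ^ l).mulVec k i : ℤ) : ℝ) ^ 2 ≤
        L ^ (2 * l) * (L⁻¹) ^ (2 * mm) + L ^ (2 * mm) * (L⁻¹) ^ (2 * l) := by
      intro l hl
      rw [Finset.mem_Icc] at hl
      have hvec : (A ^ l).mulVec k = (A ^ l * Dm ^ mm).mulVec e := by
        rw [hkdef, Matrix.mulVec_mulVec]
      rcases le_or_gt mm l with hcase | hcase
      · -- l ≥ mm : collapse to A^(l-mm)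
        have hcoll : A ^ l * Dm ^ mm = A ^ (l - mm) := by
          have : A ^ l = A ^ (l - mm) * A ^ mm := by rw [← pow_add]; congr 1; omega
          rw [this, mul_assoc, hADpow mm, mul_one]
        rw [hvec, hcoll]
        have h1 : ∑ i, (((A ^ (l - mm)).mulVec e i : ℤ) : ℝ) ^ 2 ≤ L ^ (2 * (l - mm)) := by
          rw [sq_term A hAs e (l - mm), ← hBdef, ← hwdef]
          exact hAbound (l - mm)
        have h2 : L ^ (2 * (l - mm)) = L ^ (2 * l) * (L⁻¹) ^ (2 * mm) := by
          rw [inv_pow, ← pow_sub₀ _ (ne_of_gt hL0) (by omega)]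
          congr 1; omega
        have h3 : (0:ℝ) ≤ L ^ (2 * mm) * (L⁻¹) ^ (2 * l) := by positivity
        rw [h2] at h1
        linarith
      · -- l < mm : collapse to Dm^(mm-l)
        have hcoll : A ^ l * Dm ^ mm = Dm ^ (mm - l) := by
          have : Dm ^ mm = Dm ^ l * Dm ^ (mm - l) := by rw [← pow_add]; congr 1; omega
          rw [this, ← mul_assoc, hADpow l, one_mul]
        rw [hvec, hcoll]
        have h1 : ∑ i, (((Dm ^ (mm - l)).mulVec e i : ℤ) : ℝ) ^ 2 ≤ L ^ (2 * (mm - l)) := by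
          rw [sq_term Dm hDs e (mm - l), ← hwdef]
          exact hDbound (mm - l)
        have h2 : L ^ (2 * (mm - l)) = L ^ (2 * mm) * (L⁻¹) ^ (2 * l) := by
          rw [inv_pow, ← pow_sub₀ _ (ne_of_gt hL0) (by omega)]
          congr 1; omega
        have h3 : (0:ℝ) ≤ L ^ (2 * l) * (L⁻¹) ^ (2 * mm) := by positivity
        rw [h2] at h1
        linarith
    -- sum bound
    have hsum : ∑ l ∈ Finset.Icc 1 n, ∑ i, (((A ^ l).mulVec k i : ℤ) : ℝ) ^ 2 ≤
        (L⁻¹) ^ (2 * mm) * ∑ l ∈ Finset.Icc 1 n, (L ^ 2) ^ l +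
        L ^ (2 * mm) * ∑ l ∈ Finset.Icc 1 n, ((L⁻¹) ^ 2) ^ l := by
      calc ∑ l ∈ Finset.Icc 1 n, ∑ i, (((A ^ l).mulVec k i : ℤ) : ℝ) ^ 2
          ≤ ∑ l ∈ Finset.Icc 1 n, (L ^ (2 * l) * (L⁻¹) ^ (2 * mm) + L ^ (2 * mm) * (L⁻¹) ^ (2 * l)) :=
            Finset.sum_le_sum hterm
        _ = (L⁻¹) ^ (2 * mm) * ∑ l ∈ Finset.Icc 1 n, (L ^ 2) ^ l +
            L ^ (2 * mm) * ∑ l ∈ Finset.Icc 1 n, ((L⁻¹) ^ 2) ^ l := by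
            rw [Finset.sum_add_distrib, Finset.mul_sum, Finset.mul_sum]
            congr 1
            · apply Finset.sum_congr rfl; intro l _; rw [← pow_mul]; ring
            · apply Finset.sum_congr rfl; intro l _; rw [← pow_mul]
    have hL21 : (1:ℝ) < L ^ 2 := by nlinarith [hL]
    have hgeo1 : ∑ l ∈ Finset.Icc 1 n, (L ^ 2) ^ l ≤ (L ^ 2) ^ (n + 1) / (L ^ 2 - 1) :=
      geom_ub (L ^ 2) hL21 n
    have hLi21 : ((L⁻¹) ^ 2 : ℝ) < 1 := by nlinarith [hLi0, hLi1]
    have hgeo2 : ∑ l ∈ Finset.Icc 1 n, ((L⁻¹) ^ 2) ^ l ≤ 1 / (1 - (L⁻¹) ^ 2) :=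
      geom_lb ((L⁻¹) ^ 2) (by positivity) hLi21 n
    have hinv : (1:ℝ) / (1 - (L⁻¹) ^ 2) = L ^ 2 / (L ^ 2 - 1) := by
      have hLne : L ≠ 0 := hL0.ne'
      rw [show (1:ℝ) - L⁻¹ ^ 2 = (L ^ 2 - 1) / L ^ 2 by field_simp, one_div_div]
    -- first piece: Li^(2mm) * (L^2)^(n+1)/(L^2-1) ≤ L^(n+2)/(L^2-1)
    have hLpos2 : (0:ℝ) < L ^ 2 - 1 := by linarith
    have hpiece1 : (L⁻¹) ^ (2 * mm) * ((L ^ 2) ^ (n + 1) / (L ^ 2 - 1)) ≤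
        L ^ (n + 2) / (L ^ 2 - 1) := by
      rw [mul_div_assoc'] 
      apply div_le_div_of_nonneg_right _ hLpos2.le
      have e1 : (L⁻¹) ^ (2 * mm) ≤ (L⁻¹) ^ n :=
        pow_le_pow_of_le_one (le_of_lt hLi0) (le_of_lt hLi1) hmm1
      have e2 : (L⁻¹) ^ (2 * mm) * (L ^ 2) ^ (n + 1) ≤ (L⁻¹) ^ n * (L ^ 2) ^ (n + 1) := by
        apply mul_le_mul_of_nonneg_right e1 (by positivity)
      have e3 : (L⁻¹) ^ n * (L ^ 2) ^ (n + 1) = L ^ (n + 2) := by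
        rw [← pow_mul, inv_pow]
        rw [show 2 * (n + 1) = n + (n + 2) from by ring, pow_add]
        field_simp
      linarith [e2, e3 ▸ e2]
    have hpiece2 : L ^ (2 * mm) * (L ^ 2 / (L ^ 2 - 1)) ≤ L ^ (n + 3) / (L ^ 2 - 1) := by
      rw [mul_div_assoc']
      apply div_le_div_of_nonneg_right _ hLpos2.le
      calc L ^ (2 * mm) * L ^ 2 ≤ L ^ (n + 1) * L ^ 2 := by
            apply mul_le_mul_of_nonneg_right _ (by positivity)
            exact pow_le_pow_right₀ hL.le hmm2
        _ = L ^ (n + 3) := by rw [← pow_add]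
    have hfinal : ∑ l ∈ Finset.Icc 1 n, ∑ i, (((A ^ l).mulVec k i : ℤ) : ℝ) ^ 2 ≤
        (L ^ (n + 2) + L ^ (n + 3)) / (L ^ 2 - 1) := by
      have c1 : (L⁻¹) ^ (2 * mm) * ∑ l ∈ Finset.Icc 1 n, (L ^ 2) ^ l ≤
          (L⁻¹) ^ (2 * mm) * ((L ^ 2) ^ (n + 1) / (L ^ 2 - 1)) :=
        mul_le_mul_of_nonneg_left hgeo1 (by positivity)
      have c2 : L ^ (2 * mm) * ∑ l ∈ Finset.Icc 1 n, ((L⁻¹) ^ 2) ^ l ≤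
          L ^ (2 * mm) * (L ^ 2 / (L ^ 2 - 1)) := by
        calc L ^ (2 * mm) * ∑ l ∈ Finset.Icc 1 n, ((L⁻¹) ^ 2) ^ l
            ≤ L ^ (2 * mm) * (1 / (1 - (L⁻¹) ^ 2)) :=
              mul_le_mul_of_nonneg_left hgeo2 (by positivity)
          _ = L ^ (2 * mm) * (L ^ 2 / (L ^ 2 - 1)) := by rw [hinv]
      have := add_le_add (c1.trans hpiece1) (c2.trans hpiece2)
      calc ∑ l ∈ Finset.Icc 1 n, ∑ i, (((A ^ l).mulVec k i : ℤ) : ℝ) ^ 2 ≤ _ := hsum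
        _ ≤ L ^ (n + 2) / (L ^ 2 - 1) + L ^ (n + 3) / (L ^ 2 - 1) := add_le_add (c1.trans hpiece1) (c2.trans hpiece2)
        _ = (L ^ (n + 2) + L ^ (n + 3)) / (L ^ 2 - 1) := by rw [← add_div]
    calc ∑ l ∈ Finset.Icc 1 n, ∑ i, (((A ^ l).mulVec k i : ℤ) : ℝ) ^ 2
        ≤ (L ^ (n + 2) + L ^ (n + 3)) / (L ^ 2 - 1) := hfinal
      _ ≤ (2 * L ^ 3 / (L ^ 2 - 1)) * L ^ n := by
          rw [div_mul_eq_mul_div]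
          apply div_le_div_of_nonneg_right _ hLpos2.le
          have e1 : L ^ (n + 2) ≤ L ^ (n + 3) := pow_le_pow_right₀ hL.le (by omega)
          have e2 : L ^ (n + 3) = L ^ 3 * L ^ n := by rw [← pow_add]; congr 1; omega
          nlinarith [e1, e2, pow_pos hL0 n, pow_pos hL0 3]
  -- assemble
  have hL21' : (0:ℝ) < L ^ 2 - 1 := by nlinarith [hL]
  refine ⟨L⁻¹ / |lam - mu|, 2 * L ^ 3 / (L ^ 2 - 1), div_pos hLi0 habsne,
    div_pos (mul_pos two_pos (pow_pos hL0 3)) hL21', ?_⟩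
  intro n hn
  set S : Set ℝ := {s : ℝ | ∃ k : Fin 2 → ℤ, k ≠ 0 ∧
      s = ∑ l ∈ Finset.Icc 1 n, ∑ i, (((A ^ l).mulVec k i : ℤ) : ℝ) ^ 2} with hSdef
  have hSne : S.Nonempty := by
    obtain ⟨k, hk0, _⟩ := hupp n hn
    exact ⟨_, k, hk0, rfl⟩
  have hSbdd : BddBelow S := by
    refine ⟨0, ?_⟩
    rintro x ⟨k, hk, rfl⟩
    exact Finset.sum_nonneg fun l _ => Finset.sum_nonneg fun i _ => sq_nonneg _
  rw [hexp n]
  constructor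
  · apply le_csInf hSne
    rintro x ⟨k, hk, rfl⟩
    exact hlow n hn k hk
  · obtain ⟨k, hk0, hkb⟩ := hupp n hn
    exact (csInf_le hSbdd ⟨k, hk0, rfl⟩).trans hkb
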